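/- If a run Ω is a ⊤-delay of a run Γ, then Γ is a ⊥-delay of Ω. -/

import Mathlib

/-- `IsNth x Γ k i` : the `k`-th (1-indexed) `x`-labeled move of the run `Γ`
occurs at position `i`. -/
def IsNth {M : Type*} (x : Bool) (Γ : List (Bool × M)) (k i : ℕ) : Prop :=
  ∃ h : i < Γ.length,
    (Γ.get ⟨i, h⟩).1 = x ∧ ((Γ.take i).countP (fun m => m.1 == x)) + 1 = k

/-- `LeftOf x y Γ k n` : the `k`-th `x`-labeled move of `Γ` occurs before
(to the left of) the `n`-th `y`-labeled move of `Γ`. -/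
def LeftOf {M : Type*} (x y : Bool) (Γ : List (Bool × M)) (k n : ℕ) : Prop :=
  ∃ i j, i < j ∧ IsNth x Γ k i ∧ IsNth y Γ n j

/-- `IsDelay w Γ Ω` : the run `Ω` is a `w`-delay of the run `Γ` (labels: `true` = ⊤,
`false` = ⊥): the two runs have the same subsequences of `x`-labeled moves for each
label `x`, and whenever the `k`-th `w`-labeled move of `Γ` occurs before the `n`-th
`(¬w)`-labeled move of `Γ`, the same holds in `Ω`. -/
def IsDelay {M : Type*} (w : Bool) (Γ Ω : List (Bool × M)) : Prop :=
  (∀ x : Bool, Ω.filter (fun m => m.1 == x) = Γ.filter (fun m => m.1 == x)) ∧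
  ∀ k n, LeftOf w (!w) Γ k n → LeftOf w (!w) Ω k n

section Aux

variable {M : Type*}

private lemma take_succ_get {α : Type*} (l : List α) (i : ℕ) (h : i < l.length) :
    l.take (i + 1) = l.take i ++ [l.get ⟨i, h⟩] := by
  rw [List.take_succ, List.getElem?_eq_getElem h]; rfl

private lemma countP_take_mono {α : Type*} (p : α → Bool) (l : List α) {i j : ℕ} (h : i ≤ j) :
    (l.take i).countP p ≤ (l.take j).countP p :=
  ((List.prefix_take_iff.mpr ⟨List.take_prefix _ _, by simp [h]⟩).sublist).countP_le (p := p)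

private lemma isNth_unique {x : Bool} {Γ : List (Bool × M)} {k i i' : ℕ}
    (h1 : IsNth x Γ k i) (h2 : IsNth x Γ k i') : i = i' := by
  by_contra hne
  wlog hlt : i < i' generalizing i i'
  · exact this h2 h1 (Ne.symm hne) (by omega)
  obtain ⟨hi, hp, hc⟩ := h1
  obtain ⟨hi', hp', hc'⟩ := h2
  have h3 : ((Γ.take (i + 1)).countP (fun m => m.1 == x))
      = (Γ.take i).countP (fun m => m.1 == x) + 1 := by
    rw [take_succ_get Γ i hi, List.countP_append]
    simp [List.countP_cons, show Γ[i].1 = x from hp]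
  have h4 := countP_take_mono (fun m => m.1 == x) Γ (show i + 1 ≤ i' by omega)
  omega

private lemma isNth_ge_one {x : Bool} {Γ : List (Bool × M)} {k i : ℕ}
    (h : IsNth x Γ k i) : 1 ≤ k := by
  obtain ⟨_, _, hc⟩ := h; omega

private lemma isNth_le_countP {x : Bool} {Γ : List (Bool × M)} {k i : ℕ}
    (h : IsNth x Γ k i) : k ≤ Γ.countP (fun m => m.1 == x) := by
  obtain ⟨hi, hp, hc⟩ := h
  have h3 : ((Γ.take (i + 1)).countP (fun m => m.1 == x))
      = (Γ.take i).countP (fun m => m.1 == x) + 1 := by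
    rw [take_succ_get Γ i hi, List.countP_append]
    simp [List.countP_cons, show Γ[i].1 = x from hp]
  have h4 := (List.take_sublist (i + 1) Γ).countP_le (p := fun m => m.1 == x)
  omega

private lemma exists_isNth {x : Bool} {Γ : List (Bool × M)} {k : ℕ} (hk : 1 ≤ k)
    (hc : k ≤ Γ.countP (fun m => m.1 == x)) : ∃ i, IsNth x Γ k i := by
  induction Γ generalizing k with
  | nil => simp at hc; omega
  | cons a l ih =>
    by_cases hpa : a.1 = x
    · rcases Nat.eq_or_lt_of_le hk with h1 | h1
      · exact ⟨0, by simp [IsNth, hpa, ← h1]⟩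
      · have hcl : k - 1 ≤ l.countP (fun m => m.1 == x) := by
          rw [List.countP_cons] at hc
          simp [hpa] at hc
          omega
        obtain ⟨i, hi, hp, hcnt⟩ := ih (k := k - 1) (by omega) hcl
        refine ⟨i + 1, by simpa using Nat.succ_lt_succ hi, hp, ?_⟩
        rw [List.take_succ_cons, List.countP_cons]
        simp only [hpa]
        simp
        omega
    · have hcl : k ≤ l.countP (fun m => m.1 == x) := by
        rw [List.countP_cons] at hc
        simp [hpa] at hc
        omega
      obtain ⟨i, hi, hp, hcnt⟩ := ih hk hcl
      refine ⟨i + 1, by simpa using Nat.succ_lt_succ hi, hp, ?_⟩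
      rw [List.take_succ_cons, List.countP_cons]
      simp [hpa]
      omega

private lemma isNth_ne {x y : Bool} {Γ : List (Bool × M)} {k n i j : ℕ} (hxy : x ≠ y)
    (h1 : IsNth x Γ k i) (h2 : IsNth y Γ n j) : i ≠ j := by
  rintro rfl
  obtain ⟨hi, hp, -⟩ := h1
  obtain ⟨hj, hq, -⟩ := h2
  exact hxy (hp ▸ hq ▸ rfl)

end Aux

/-- If `Ω` is a ⊤-delay of `Γ`, then `Γ` is a ⊥-delay of `Ω`. -/
theorem bot_delay_of_top_delay {M : Type*} (Γ Ω : List (Bool × M))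
    (h : IsDelay true Γ Ω) : IsDelay false Ω Γ := by
  obtain ⟨hf, hd⟩ := h
  have hcount : ∀ x : Bool,
      Ω.countP (fun m => m.1 == x) = Γ.countP (fun m => m.1 == x) := by
    intro x
    rw [List.countP_eq_length_filter, List.countP_eq_length_filter, hf x]
  refine ⟨fun x => (hf x).symm, ?_⟩
  rintro k n ⟨i, j, hij, hki, hnj⟩
  simp only [Bool.not_false] at hnj ⊢
  -- obtain the k-th ⊥-move and n-th ⊤-move of Γ
  obtain ⟨i', hki'⟩ : ∃ i', IsNth false Γ k i' :=
    exists_isNth (isNth_ge_one hki) ((hcount false) ▸ isNth_le_countP hki)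
  obtain ⟨j', hnj'⟩ : ∃ j', IsNth true Γ n j' :=
    exists_isNth (isNth_ge_one hnj) ((hcount true) ▸ isNth_le_countP hnj)
  have hne : i' ≠ j' := isNth_ne (by simp) hki' hnj'
  rcases Nat.lt_or_gt_of_ne hne with hlt | hlt
  · exact ⟨i', j', hlt, hki', hnj'⟩
  · exfalso
    have : LeftOf true (!true) Γ n k := ⟨j', i', hlt, hnj', by simpa using hki'⟩
    obtain ⟨j'', i'', hlt2, hn2, hk2⟩ := hd n k this
    simp only [Bool.not_true] at hk2
    have e1 : i'' = i := isNth_unique hk2 hki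
    have e2 : j'' = j := isNth_unique hn2 hnj
    omega
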